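/- Let G be a type with a binary multiplication (Mul G, not assumed associative or unital) satisfying x * (y * y) = y * x for all x, y : G. Then the convolution product on MonoidAlgebra (ZMod 2) G (finitely supported functions G →₀ ZMod 2, which is the lifted multiplication of the ℤ₂-multiset monad) satisfies ξ * (ζ * ζ) = ζ * ξ for all ξ, ζ : MonoidAlgebra (ZMod 2) G. In other words, the generalised multiset monad over the semiring ℤ₂ preserves the equation x(yy) = yx. -/

import Mathlib

theorem multiset_Z2_preserves_xyy_eq_yx
    {G : Type*} [Mul G] (h : ∀ x y : G, x * (y * y) = y * x)
    (ξ ζ : MonoidAlgebra (ZMod 2) G) :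
    ξ * (ζ * ζ) = ζ * ξ := by
  classical
  have comm : ∀ a b : G, a * b = b * a := fun a b => by
    calc a * b = b * (a * a) := (h b a).symm
      _ = (a*a) * (b*b) := (h (a*a) b).symm
      _ = (b*b) * ((a*a)*(a*a)) := (h (b*b) (a*a)).symm
      _ = (b*b) * (a*(a*a)) := by rw [h (a*a) a]
      _ = (b*b) * (a*a) := by rw [h a a]
      _ = a * (b*b) := h (b*b) a
      _ = b * a := h a b
  have hZ : ∀ c : ZMod 2, c * c = c := by decide
  have hadd : ∀ c : ZMod 2, c + c = 0 := by decide
  -- ζ * ζ collapses to the diagonal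
  have key : ζ * ζ = ∑ a ∈ ζ.coeff.support, MonoidAlgebra.single (a*a) (ζ.coeff a) := by
    rw [MonoidAlgebra.mul_def]
    simp only [Finsupp.sum]
    rw [← Finset.sum_product']
    rw [← Finset.sum_filter_add_sum_filter_not (ζ.coeff.support ×ˢ ζ.coeff.support) (fun p => p.1 = p.2)]
    have h2 : ∑ p ∈ (ζ.coeff.support ×ˢ ζ.coeff.support).filter (fun p => ¬ p.1 = p.2),
        MonoidAlgebra.single (p.1*p.2) (ζ.coeff p.1 * ζ.coeff p.2) = 0 := by
      refine Finset.sum_involution (fun p _ => p.swap) ?_ ?_ ?_ ?_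
      · intro p hp
        simp only [Prod.fst_swap, Prod.snd_swap]
        rw [comm p.2 p.1, mul_comm (ζ.coeff p.2) (ζ.coeff p.1), ← MonoidAlgebra.single_add, hadd,
          MonoidAlgebra.single_zero]
      · intro p hp _ hc
        simp only [Finset.mem_filter] at hp
        exact hp.2 (congrArg Prod.snd hc)
      · intro p hp
        simp only [Finset.mem_filter, Finset.mem_product, Prod.fst_swap, Prod.snd_swap] at hp ⊢
        exact ⟨⟨hp.1.2, hp.1.1⟩, fun hc => hp.2 hc.symm⟩
      · intro p hp
        exact Prod.swap_swap p
    have h1 : ∑ p ∈ (ζ.coeff.support ×ˢ ζ.coeff.support).filter (fun p => p.1 = p.2),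
        MonoidAlgebra.single (p.1*p.2) (ζ.coeff p.1 * ζ.coeff p.2)
        = ∑ a ∈ ζ.coeff.support, MonoidAlgebra.single (a*a) (ζ.coeff a) := by
      refine Finset.sum_bij' (fun p _ => p.1) (fun a _ => (a, a)) ?_ ?_ ?_ ?_ ?_
      · intro p hp
        simp only [Finset.mem_filter, Finset.mem_product] at hp
        exact hp.1.1
      · intro a ha
        simp only [Finset.mem_filter, Finset.mem_product]
        exact ⟨⟨ha, ha⟩, trivial⟩
      · intro p hp
        simp only [Finset.mem_filter] at hp
        exact Prod.ext rfl hp.2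
      · intro a ha; rfl
      · intro p hp
        simp only [Finset.mem_filter] at hp
        rw [← hp.2, hZ]
    rw [h1, h2, add_zero]
  rw [key, Finset.mul_sum]
  conv_rhs => rw [MonoidAlgebra.mul_def, Finsupp.sum]
  refine Finset.sum_congr rfl fun a ha => ?_
  rw [MonoidAlgebra.mul_def, Finsupp.sum, Finsupp.sum]
  refine Finset.sum_congr rfl fun x hx => ?_
  rw [MonoidAlgebra.sum_single_index (by simp), h x a, mul_comm (ξ.coeff x) (ζ.coeff a)]
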